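/- The function A(τ) = I₁(τ)/I₀(τ), where I₀ and I₁ are the modified Bessel functions of the first kind of orders 0 and 1, is strictly increasing on (0, ∞), satisfies A(0) = 0 and A(τ) < 1 for all τ ≥ 0, and A(τ) → 1 as τ → ∞. -/

import Mathlib

open Real Filter

/-- Modified Bessel function of the first kind of order 0. -/
noncomputable def besselI0 (τ : ℝ) : ℝ := (1 / π) * ∫ t in (0 : ℝ)..π, Real.exp (τ * Real.cos t)

/-- Modified Bessel function of the first kind of order 1. -/
noncomputable def besselI1 (τ : ℝ) : ℝ :=
  (1 / π) * ∫ t in (0 : ℝ)..π, Real.exp (τ * Real.cos t) * Real.cos t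

/-- The mean resultant length map `A(τ) = I₁(τ)/I₀(τ)`. -/
noncomputable def besselRatio (τ : ℝ) : ℝ := besselI1 τ / besselI0 τ

section Aux
open MeasureTheory intervalIntegral Set

lemma contJ (τ : ℝ) (g : ℝ → ℝ) (hg : Continuous g) :
    Continuous (fun t => Real.exp (τ * Real.cos t) * g t) := by
  fun_prop

lemma intJ (τ : ℝ) (g : ℝ → ℝ) (hg : Continuous g) {a b : ℝ} :
    IntervalIntegrable (fun t => Real.exp (τ * Real.cos t) * g t) volume a b :=
  (contJ τ g hg).intervalIntegrable a b

lemma J0_pos (τ : ℝ) : 0 < ∫ t in (0:ℝ)..π, Real.exp (τ * Real.cos t) := by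
  apply intervalIntegral_pos_of_pos _ (fun t => Real.exp_pos _) Real.pi_pos
  exact (Real.continuous_exp.comp (continuous_const.mul Real.continuous_cos)).intervalIntegrable 0 π

lemma besselI0_pos (τ : ℝ) : 0 < besselI0 τ := by
  have := J0_pos τ
  have hπ := Real.pi_pos
  unfold besselI0
  positivity

/-- Differentiation under the integral sign for the Bessel-type integrals. -/
lemma hasDerivAt_J (τ : ℝ) (g : ℝ → ℝ) (hg : Continuous g) (hg1 : ∀ t, |g t| ≤ 1) :
    HasDerivAt (fun x => ∫ t in (0:ℝ)..π, Real.exp (x * Real.cos t) * g t)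
      (∫ t in (0:ℝ)..π, Real.exp (τ * Real.cos t) * Real.cos t * g t) τ := by
  have h := intervalIntegral.hasDerivAt_integral_of_dominated_loc_of_deriv_le
    (F := fun x t => Real.exp (x * Real.cos t) * g t)
    (F' := fun x t => Real.exp (x * Real.cos t) * Real.cos t * g t)
    (x₀ := τ) (a := 0) (b := π) (μ := volume)
    (bound := fun _ => Real.exp (|τ| + 1)) (s := Metric.ball τ 1) (Metric.ball_mem_nhds τ one_pos)
    (Filter.Eventually.of_forall fun x => ((contJ x g hg).aestronglyMeasurable))
    (intJ τ g hg)
    ((contJ τ (fun t => Real.cos t * g t) (Real.continuous_cos.mul hg)).aestronglyMeasurable.congr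
      (by filter_upwards with t; ring))
    ?_ (intervalIntegrable_const) ?_
  · exact h.2
  · filter_upwards with t _ x hx
    have hx1 : |x| ≤ |τ| + 1 := by
      have := abs_sub_abs_le_abs_sub x τ
      have hd : |x - τ| < 1 := by simpa [Real.dist_eq] using hx
      linarith
    have hcos : |Real.cos t| ≤ 1 := Real.abs_cos_le_one t
    have h1 : Real.exp (x * Real.cos t) ≤ Real.exp (|τ| + 1) := by
      apply Real.exp_le_exp.2
      calc x * Real.cos t ≤ |x * Real.cos t| := le_abs_self _
        _ = |x| * |Real.cos t| := abs_mul _ _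
        _ ≤ (|τ| + 1) * 1 := by
            apply mul_le_mul hx1 hcos (abs_nonneg _) (by positivity)
        _ = |τ| + 1 := mul_one _
    calc ‖Real.exp (x * Real.cos t) * Real.cos t * g t‖
        = Real.exp (x * Real.cos t) * |Real.cos t| * |g t| := by
          rw [norm_eq_abs, abs_mul, abs_mul, abs_of_pos (Real.exp_pos _)]
      _ ≤ Real.exp (|τ| + 1) * 1 * 1 := by
          apply mul_le_mul _ (hg1 t) (abs_nonneg _) (by positivity)
          exact mul_le_mul h1 hcos (abs_nonneg _) (Real.exp_pos _).le
      _ = Real.exp (|τ| + 1) := by ring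
  · filter_upwards with t _ x _
    have : HasDerivAt (fun x : ℝ => Real.exp (x * Real.cos t))
        (Real.exp (x * Real.cos t) * Real.cos t) x := by
      simpa using ((hasDerivAt_id x).mul_const (Real.cos t)).exp
    exact this.mul_const (g t)

lemma hasDerivAt_I0 (τ : ℝ) : HasDerivAt besselI0 (besselI1 τ) τ := by
  have h := HasDerivAt.const_mul (1/π)
    (hasDerivAt_J τ (fun _ => 1) continuous_const (fun t => by norm_num))
  simp only [mul_one] at h
  exact h

lemma hasDerivAt_I1 (τ : ℝ) :
    HasDerivAt besselI1
      ((1/π) * ∫ t in (0:ℝ)..π, Real.exp (τ * Real.cos t) * (Real.cos t * Real.cos t)) τ := by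
  have h := HasDerivAt.const_mul (1/π)
    (hasDerivAt_J τ Real.cos Real.continuous_cos (fun t => Real.abs_cos_le_one t))
  simp only [mul_assoc] at h ⊢
  exact h

lemma key_pos (τ : ℝ) :
    0 < (∫ t in (0:ℝ)..π, Real.exp (τ * Real.cos t) * (Real.cos t * Real.cos t)) *
          (∫ t in (0:ℝ)..π, Real.exp (τ * Real.cos t))
        - (∫ t in (0:ℝ)..π, Real.exp (τ * Real.cos t) * Real.cos t) ^ 2 := by
  set J0 := ∫ t in (0:ℝ)..π, Real.exp (τ * Real.cos t) with hJ0
  set J1 := ∫ t in (0:ℝ)..π, Real.exp (τ * Real.cos t) * Real.cos t with hJ1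
  set J2 := ∫ t in (0:ℝ)..π, Real.exp (τ * Real.cos t) * (Real.cos t * Real.cos t) with hJ2
  have hJ0pos : 0 < J0 := J0_pos τ
  set m := J1 / J0 with hm
  -- the "variance" integral
  set K := ∫ t in (0:ℝ)..π, Real.exp (τ * Real.cos t) * (Real.cos t - m) ^ 2 with hK
  have hint2 : IntervalIntegrable
      (fun t => Real.exp (τ * Real.cos t) * (Real.cos t * Real.cos t)) volume 0 π :=
    intJ τ _ (by fun_prop)
  have hint1 : IntervalIntegrable
      (fun t => Real.exp (τ * Real.cos t) * Real.cos t) volume 0 π :=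
    intJ τ _ (by fun_prop)
  have hint0 : IntervalIntegrable (fun t => Real.exp (τ * Real.cos t)) volume 0 π := by
    have := intJ τ (fun _ => 1) continuous_const (a := 0) (b := π)
    simpa using this
  have hintK : IntervalIntegrable
      (fun t => Real.exp (τ * Real.cos t) * (Real.cos t - m) ^ 2) volume 0 π :=
    intJ τ _ (by fun_prop)
  -- expand K
  have hKval : K = J2 - 2 * m * J1 + m ^ 2 * J0 := by
    have heq : (fun t => Real.exp (τ * Real.cos t) * (Real.cos t - m) ^ 2)
        = fun t => (Real.exp (τ * Real.cos t) * (Real.cos t * Real.cos t)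
            - 2 * m * (Real.exp (τ * Real.cos t) * Real.cos t))
          + m ^ 2 * Real.exp (τ * Real.cos t) := by
      funext t; ring
    rw [hK, heq, intervalIntegral.integral_add (hint2.sub (hint1.const_mul _))
      (hint0.const_mul _), intervalIntegral.integral_sub hint2 (hint1.const_mul _),
      intervalIntegral.integral_const_mul, intervalIntegral.integral_const_mul]
  -- K is positive
  have hKpos : 0 < K := by
    have hπ := Real.pi_pos
    rcases le_or_gt 0 m with hm0 | hm0
    · -- use (2π/3, π) where cos < -1/2 ≤ 0 ≤ m
      have hsplit := intervalIntegral.integral_add_adjacent_intervals (μ := volume)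
        (a := 0) (b := 2*π/3) (c := π)
        ((contJ τ _ (by fun_prop : Continuous fun t => (Real.cos t - m)^2)).intervalIntegrable _ _)
        ((contJ τ _ (by fun_prop : Continuous fun t => (Real.cos t - m)^2)).intervalIntegrable _ _)
      have h1 : 0 ≤ ∫ t in (0:ℝ)..(2*π/3),
          Real.exp (τ * Real.cos t) * (Real.cos t - m) ^ 2 := by
        apply intervalIntegral.integral_nonneg (by positivity)
        intro u _; positivity
      have h2 : 0 < ∫ t in (2*π/3:ℝ)..π,
          Real.exp (τ * Real.cos t) * (Real.cos t - m) ^ 2 := by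
        apply intervalIntegral.intervalIntegral_pos_of_pos_on
          ((contJ τ _ (by fun_prop : Continuous fun t => (Real.cos t - m)^2)).intervalIntegrable _ _)
          _ (by linarith)
        intro t ht
        have hc : Real.cos t < Real.cos (2*π/3) := by
          apply Real.strictAntiOn_cos ⟨by positivity, by linarith⟩
            ⟨by nlinarith [ht.1], ht.2.le⟩ ht.1
        have hc23 : Real.cos (2*π/3) = -(1/2) := by
          have : (2*π/3 : ℝ) = π - π/3 := by ring
          rw [this, Real.cos_pi_sub, Real.cos_pi_div_three]
        have hne : Real.cos t - m < 0 := by rw [hc23] at hc; linarith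
        have h2 : 0 < (Real.cos t - m) ^ 2 := by nlinarith
        exact mul_pos (Real.exp_pos _) h2
      rw [hK, ← hsplit]; linarith
    · -- m < 0 : use (0, π/3) where cos > 1/2 > 0 > m
      have hsplit := intervalIntegral.integral_add_adjacent_intervals (μ := volume)
        (a := 0) (b := π/3) (c := π)
        ((contJ τ _ (by fun_prop : Continuous fun t => (Real.cos t - m)^2)).intervalIntegrable _ _)
        ((contJ τ _ (by fun_prop : Continuous fun t => (Real.cos t - m)^2)).intervalIntegrable _ _)
      have h1 : 0 < ∫ t in (0:ℝ)..(π/3),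
          Real.exp (τ * Real.cos t) * (Real.cos t - m) ^ 2 := by
        apply intervalIntegral.intervalIntegral_pos_of_pos_on
          ((contJ τ _ (by fun_prop : Continuous fun t => (Real.cos t - m)^2)).intervalIntegrable _ _)
          _ (by positivity)
        intro t ht
        have hc : Real.cos (π/3) < Real.cos t := by
          apply Real.strictAntiOn_cos ⟨ht.1.le, by linarith [ht.2]⟩
            ⟨by positivity, by linarith⟩ ht.2
        rw [Real.cos_pi_div_three] at hc
        have hne : 0 < Real.cos t - m := by linarith
        have h2 : 0 < (Real.cos t - m) ^ 2 := by nlinarith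
        exact mul_pos (Real.exp_pos _) h2
      have h2 : 0 ≤ ∫ t in (π/3:ℝ)..π,
          Real.exp (τ * Real.cos t) * (Real.cos t - m) ^ 2 := by
        apply intervalIntegral.integral_nonneg (by linarith)
        intro u _; positivity
      rw [hK, ← hsplit]; linarith
  -- conclude
  have : J2 * J0 - J1 ^ 2 = K * J0 := by
    rw [hKval, hm]; field_simp; ring
  rw [this]; exact mul_pos hKpos hJ0pos

lemma besselRatio_strictMono : StrictMono besselRatio := by
  apply strictMono_of_hasDerivAt_pos
    (f' := fun τ => (((1/π) * ∫ t in (0:ℝ)..π, Real.exp (τ * Real.cos t) * (Real.cos t * Real.cos t))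
        * besselI0 τ - besselI1 τ * besselI1 τ) / besselI0 τ ^ 2)
  · intro x
    exact (hasDerivAt_I1 x).div (hasDerivAt_I0 x) (besselI0_pos x).ne'
  · intro x
    apply div_pos _ (pow_pos (besselI0_pos x) 2)
    have h := key_pos x
    have hπ := Real.pi_pos
    unfold besselI0 besselI1
    set J0 := ∫ t in (0:ℝ)..π, Real.exp (x * Real.cos t)
    set J1 := ∫ t in (0:ℝ)..π, Real.exp (x * Real.cos t) * Real.cos t
    set J2 := ∫ t in (0:ℝ)..π, Real.exp (x * Real.cos t) * (Real.cos t * Real.cos t)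
    have : 1/π * J2 * (1/π * J0) - 1/π * J1 * (1/π * J1)
        = (1/π)^2 * (J2 * J0 - J1 ^ 2) := by ring
    rw [this]
    positivity

lemma besselI1_lt_besselI0 (τ : ℝ) : besselI1 τ < besselI0 τ := by
  have hπ := Real.pi_pos
  have hint0 : IntervalIntegrable (fun t => Real.exp (τ * Real.cos t)) volume 0 π := by
    simpa using intJ τ (fun _ => 1) continuous_const (a := 0) (b := π)
  have hint1 : IntervalIntegrable (fun t => Real.exp (τ * Real.cos t) * Real.cos t)
      volume 0 π := intJ τ _ Real.continuous_cos
  have hpos : 0 < ∫ t in (0:ℝ)..π,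
      (Real.exp (τ * Real.cos t) - Real.exp (τ * Real.cos t) * Real.cos t) := by
    apply intervalIntegral.intervalIntegral_pos_of_pos_on (hint0.sub hint1) _ hπ
    intro t ht
    have h1 : Real.cos t < 1 := by
      have := Real.strictAntiOn_cos (Set.left_mem_Icc.2 hπ.le) ⟨ht.1.le, ht.2.le⟩ ht.1
      simpa using this
    nlinarith [Real.exp_pos (τ * Real.cos t)]
  rw [intervalIntegral.integral_sub hint0 hint1] at hpos
  unfold besselI0 besselI1
  exact mul_lt_mul_of_pos_left (by linarith) (by positivity)

lemma besselRatio_lt_one' (τ : ℝ) : besselRatio τ < 1 :=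
  (div_lt_one (besselI0_pos τ)).2 (besselI1_lt_besselI0 τ)

lemma besselRatio_zero : besselRatio 0 = 0 := by
  have h1 : besselI1 0 = 0 := by
    unfold besselI1
    simp [integral_cos]
  simp [besselRatio, h1]

set_option maxHeartbeats 1000000 in
lemma tendsto_besselRatio : Tendsto besselRatio atTop (nhds 1) := by
  have hπ := Real.pi_pos
  have key : Tendsto (fun τ => 1 - besselRatio τ) atTop (nhds 0) := by
    rw [Metric.tendsto_nhds]
    intro ε hε
    set q : ℝ := max 0 (1 - ε/4) with hq
    have hq0 : 0 ≤ q := le_max_left _ _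
    have hq1 : q < 1 := by apply max_lt one_pos; linarith
    set δ : ℝ := Real.arccos q with hδ
    have hδ0 : 0 < δ := Real.arccos_pos.2 hq1
    have hδπ : δ ≤ π := Real.arccos_le_pi q
    have hcosδ : Real.cos δ = q := Real.cos_arccos (by linarith) hq1.le
    have h1cos : 1 - Real.cos δ ≤ ε/4 := by
      rw [hcosδ]
      have := le_max_right (0:ℝ) (1 - ε/4); linarith
    have hcc : Real.cos δ < Real.cos (δ/2) :=
      Real.strictAntiOn_cos ⟨by linarith, by linarith⟩ ⟨hδ0.le, hδπ⟩ (by linarith)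
    set cst : ℝ := Real.cos (δ/2) - Real.cos δ with hcst
    have hcstpos : 0 < cst := by rw [hcst]; linarith
    have hsmall : Tendsto (fun τ : ℝ => 4*π/δ * Real.exp (-(τ * cst))) atTop (nhds 0) := by
      have h1 : Tendsto (fun τ : ℝ => τ * cst) atTop atTop :=
        Tendsto.atTop_mul_const hcstpos tendsto_id
      have h2 := Real.tendsto_exp_atBot.comp (tendsto_neg_atTop_atBot.comp h1)
      have h3 := h2.const_mul (4*π/δ)
      simpa [Function.comp_def] using h3
    have hev : ∀ᶠ τ : ℝ in atTop, 4*π/δ * Real.exp (-(τ * cst)) < ε/2 :=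
      hsmall.eventually_lt_const (by linarith)
    filter_upwards [hev, eventually_ge_atTop (0:ℝ)] with τ hsm hτ0
    -- the pointwise estimate
    have hint0 : IntervalIntegrable (fun t => Real.exp (τ * Real.cos t)) volume 0 π := by
      simpa using intJ τ (fun _ => 1) continuous_const (a := 0) (b := π)
    have hint1 : IntervalIntegrable (fun t => Real.exp (τ * Real.cos t) * Real.cos t)
        volume 0 π := intJ τ _ Real.continuous_cos
    have hcontE : Continuous (fun t => Real.exp (τ * Real.cos t)) := by fun_prop
    have hcont : Continuous (fun t => Real.exp (τ * Real.cos t) * (1 - Real.cos t)) := by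
      fun_prop
    set J0 := ∫ t in (0:ℝ)..π, Real.exp (τ * Real.cos t) with hJ0d
    set J1 := ∫ t in (0:ℝ)..π, Real.exp (τ * Real.cos t) * Real.cos t with hJ1d
    have hD : 0 < J0 := J0_pos τ
    have hratio : besselRatio τ = J1 / J0 := by
      unfold besselRatio besselI0 besselI1
      rw [mul_div_mul_left _ _ (by positivity : (1:ℝ)/π ≠ 0)]
    set N := ∫ t in (0:ℝ)..π, Real.exp (τ * Real.cos t) * (1 - Real.cos t) with hNd
    have hNval : N = J0 - J1 := by
      rw [hNd, hJ0d, hJ1d, ← intervalIntegral.integral_sub hint0 hint1]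
      congr 1; funext t; ring
    have hA : 1 - besselRatio τ = N / J0 := by
      rw [hratio, hNval]; field_simp
    have hNsplit : (∫ t in (0:ℝ)..δ, Real.exp (τ * Real.cos t) * (1 - Real.cos t))
        + (∫ t in δ..π, Real.exp (τ * Real.cos t) * (1 - Real.cos t)) = N :=
      intervalIntegral.integral_add_adjacent_intervals (hcont.intervalIntegrable _ _)
        (hcont.intervalIntegrable _ _)
    have hB1 : (∫ t in (0:ℝ)..δ, Real.exp (τ * Real.cos t) * (1 - Real.cos t))
        ≤ ε/4 * J0 := by
      have step1 : (∫ t in (0:ℝ)..δ, Real.exp (τ * Real.cos t) * (1 - Real.cos t))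
          ≤ ∫ t in (0:ℝ)..δ, ε/4 * Real.exp (τ * Real.cos t) := by
        apply intervalIntegral.integral_mono_on hδ0.le (hcont.intervalIntegrable _ _)
          ((by fun_prop : Continuous fun t => ε/4 * Real.exp (τ * Real.cos t)).intervalIntegrable _ _)
        intro t ht
        have hc1 : Real.cos δ ≤ Real.cos t :=
          Real.cos_le_cos_of_nonneg_of_le_pi ht.1 hδπ ht.2
        nlinarith [Real.exp_pos (τ * Real.cos t)]
      have hsplitD : (∫ t in (0:ℝ)..δ, Real.exp (τ * Real.cos t))
          + (∫ t in δ..π, Real.exp (τ * Real.cos t)) = J0 :=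
        intervalIntegral.integral_add_adjacent_intervals (hcontE.intervalIntegrable _ _)
          (hcontE.intervalIntegrable _ _)
      have hrest : 0 ≤ ∫ t in δ..π, Real.exp (τ * Real.cos t) :=
        intervalIntegral.integral_nonneg hδπ fun u _ => (Real.exp_pos _).le
      rw [intervalIntegral.integral_const_mul] at step1
      have : (∫ t in (0:ℝ)..δ, Real.exp (τ * Real.cos t)) ≤ J0 := by linarith
      nlinarith [step1, this]
    have hB2 : (∫ t in δ..π, Real.exp (τ * Real.cos t) * (1 - Real.cos t))
        ≤ 2*π*Real.exp (τ * Real.cos δ) := by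
      have step1 : (∫ t in δ..π, Real.exp (τ * Real.cos t) * (1 - Real.cos t))
          ≤ ∫ _t in δ..π, 2*Real.exp (τ * Real.cos δ) := by
        apply intervalIntegral.integral_mono_on hδπ (hcont.intervalIntegrable _ _)
          intervalIntegrable_const
        intro t ht
        have hc1 : Real.cos t ≤ Real.cos δ :=
          Real.cos_le_cos_of_nonneg_of_le_pi hδ0.le ht.2 ht.1
        have hexp : Real.exp (τ * Real.cos t) ≤ Real.exp (τ * Real.cos δ) :=
          Real.exp_le_exp.2 (mul_le_mul_of_nonneg_left hc1 hτ0)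
        have h1 : Real.exp (τ * Real.cos t) * (1 - Real.cos t)
            ≤ Real.exp (τ * Real.cos δ) * (1 - Real.cos t) :=
          mul_le_mul_of_nonneg_right hexp (by nlinarith [Real.cos_le_one t])
        have h2 : Real.exp (τ * Real.cos δ) * (1 - Real.cos t)
            ≤ Real.exp (τ * Real.cos δ) * 2 :=
          mul_le_mul_of_nonneg_left (by nlinarith [Real.neg_one_le_cos t])
            (Real.exp_pos _).le
        linarith
      rw [intervalIntegral.integral_const, smul_eq_mul] at step1
      nlinarith [Real.exp_pos (τ * Real.cos δ)]
    have hB3 : δ/2 * Real.exp (τ * Real.cos (δ/2)) ≤ J0 := by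
      have step1 : (∫ _t in (0:ℝ)..(δ/2), Real.exp (τ * Real.cos (δ/2)))
          ≤ ∫ t in (0:ℝ)..(δ/2), Real.exp (τ * Real.cos t) := by
        apply intervalIntegral.integral_mono_on (by linarith) intervalIntegrable_const
          (hcontE.intervalIntegrable _ _)
        intro t ht
        have hc1 : Real.cos (δ/2) ≤ Real.cos t :=
          Real.cos_le_cos_of_nonneg_of_le_pi ht.1 (by linarith) ht.2
        exact Real.exp_le_exp.2 (mul_le_mul_of_nonneg_left hc1 hτ0)
      rw [intervalIntegral.integral_const, smul_eq_mul, sub_zero] at step1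
      have hsplitD : (∫ t in (0:ℝ)..(δ/2), Real.exp (τ * Real.cos t))
          + (∫ t in (δ/2)..π, Real.exp (τ * Real.cos t)) = J0 :=
        intervalIntegral.integral_add_adjacent_intervals (hcontE.intervalIntegrable _ _)
          (hcontE.intervalIntegrable _ _)
      have hrest : 0 ≤ ∫ t in (δ/2)..π, Real.exp (τ * Real.cos t) :=
        intervalIntegral.integral_nonneg (by linarith) fun u _ => (Real.exp_pos _).le
      linarith
    have hNbound : N ≤ ε/4 * J0 + 2*π*Real.exp (τ * Real.cos δ) := by linarith
    have hN0 : 0 ≤ N := by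
      apply intervalIntegral.integral_nonneg hπ.le
      intro u _
      nlinarith [Real.exp_pos (τ * Real.cos u), Real.cos_le_one u]
    have hfinal : 1 - besselRatio τ < ε := by
      rw [hA]
      have h1 : N / J0 ≤ (ε/4 * J0 + 2*π*Real.exp (τ * Real.cos δ)) / J0 := by gcongr
      have h2 : (ε/4 * J0 + 2*π*Real.exp (τ * Real.cos δ)) / J0
          = ε/4 + 2*π*Real.exp (τ * Real.cos δ) / J0 := by field_simp
      have h3 : 2*π*Real.exp (τ * Real.cos δ) / J0
          ≤ 2*π*Real.exp (τ * Real.cos δ) / (δ/2 * Real.exp (τ * Real.cos (δ/2))) := by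
        gcongr
      have h4 : 2*π*Real.exp (τ * Real.cos δ) / (δ/2 * Real.exp (τ * Real.cos (δ/2)))
          = 4*π/δ * Real.exp (-(τ * cst)) := by
        rw [show (-(τ * cst)) = τ * Real.cos δ - τ * Real.cos (δ/2) by rw [hcst]; ring,
          Real.exp_sub]
        field_simp [hδ0.ne']
        ring
      linarith [hsm]
    rw [Real.dist_0_eq_abs, abs_of_nonneg (by linarith [besselRatio_lt_one' τ])]
    exact hfinal
  have h := (tendsto_const_nhds (x := (1:ℝ)) (f := atTop)).sub key
  simpa using h

end Aux

theorem besselRatio_properties :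
    StrictMonoOn besselRatio (Set.Ioi (0 : ℝ)) ∧ besselRatio 0 = 0 ∧
      (∀ τ : ℝ, 0 ≤ τ → besselRatio τ < 1) ∧
      Tendsto besselRatio atTop (nhds 1) := by
  exact ⟨besselRatio_strictMono.strictMonoOn _, besselRatio_zero,
    fun τ _ => besselRatio_lt_one' τ, tendsto_besselRatio⟩
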